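/- Fix 0 < λ < 1 and d ≥ 2. Define v*_0 = 1, v*_k = 1-(1-λ v*_{k-1})^{1/d}, and c_k = v*_k/(λ/d)^k. Suppose k_0 is such that v*_{k_0-1} < 1/d and c_k < c_{k-1} + c_{k-1}² (d/2)(λ/d)^k for all k > k_0. Then c_k < c_{k_0}(1 + λ + λ² + ... + λ^{k-k_0}) for all k > k_0, and hence c_k < c_{k_0}/(1-λ) uniformly in k > k_0. -/

import Mathlib

lemma stmt16_aux_sq (n : ℕ) : (n+1)^2 ≤ 2^(n+2) := by
  induction n with
  | zero => norm_num
  | succ n ih =>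
    rcases lt_or_ge n 2 with h|h
    · interval_cases n <;> norm_num
    · have h2 : (2:ℕ)^(n+3) = 2 * 2^(n+2) := by ring
      rw [h2]
      nlinarith [ih]

set_option maxHeartbeats 1600000 in
/-- induction step in the O((λ/d)^k) tail bound: if
v*_{k_0-1} < 1/d and c_k < c_{k-1} + c_{k-1}² (d/2)(λ/d)^k for k > k_0, then
c_k < c_{k_0}(1+λ+⋯+λ^{k-k_0}) and hence c_k < c_{k_0}/(1-λ) for k > k_0. -/
theorem stmt16 (lam : ℝ) (hl0 : 0 < lam) (hl1 : lam < 1) (d : ℕ) (hd : 2 ≤ d)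
    (v : ℕ → ℝ) (hv0 : v 0 = 1)
    (hv : ∀ k, v (k + 1) = 1 - (1 - lam * v k) ^ (1 / (d : ℝ)))
    (c : ℕ → ℝ) (hc : ∀ k, c k = v k / (lam / d) ^ k)
    (k0 : ℕ) (hk0 : 1 ≤ k0) (hvk0 : v (k0 - 1) < 1 / d)
    (hstep : ∀ k, k0 < k → c k < c (k - 1) + (c (k - 1)) ^ 2 * (d / 2) * (lam / d) ^ k) :
    ∀ k, k0 < k →
      c k < c k0 * (∑ i ∈ Finset.range (k - k0 + 1), lam ^ i) ∧
      c k < c k0 / (1 - lam) := by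
  have hd0 : (0:ℝ) < (d:ℝ) := by
    have : (0:ℕ) < d := by omega
    exact_mod_cast this
  have hd2 : (2:ℝ) ≤ (d:ℝ) := by exact_mod_cast hd
  have hdne : (d:ℝ) ≠ 0 := ne_of_gt hd0
  have hr0 : 0 < lam / d := div_pos hl0 hd0
  have hr1 : lam / d < 1 := by
    rw [div_lt_one hd0]; linarith
  -- v is in (0,1]
  have hvpos : ∀ k, 0 < v k ∧ v k ≤ 1 := by
    intro k
    induction k with
    | zero => rw [hv0]; norm_num
    | succ k ih =>
      obtain ⟨h1, h2⟩ := ih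
      have hlv0 : 0 < lam * v k := mul_pos hl0 h1
      have hlv1 : lam * v k < 1 := by nlinarith
      have hb0 : 0 < 1 - lam * v k := by linarith
      have hb1 : 1 - lam * v k < 1 := by linarith
      have hz : 0 < 1 / (d:ℝ) := by positivity
      have hp0 : 0 < (1 - lam * v k) ^ (1 / (d:ℝ)) := Real.rpow_pos_of_pos hb0 _
      have hp1 : (1 - lam * v k) ^ (1 / (d:ℝ)) < 1 :=
        Real.rpow_lt_one (le_of_lt hb0) hb1 hz
      rw [hv k]
      constructor <;> linarith
  -- v k0 < lam / d  (so in particular v k0 ≤ 1/2)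
  have hvk0lt : v k0 < lam / d := by
    obtain ⟨hp, hp1⟩ := hvpos (k0 - 1)
    have hlv0 : 0 < lam * v (k0 - 1) := mul_pos hl0 hp
    have hlv1 : lam * v (k0 - 1) < 1 := by nlinarith
    have hb0 : 0 < 1 - lam * v (k0 - 1) := by linarith
    have hb1 : 1 - lam * v (k0 - 1) ≤ 1 := by linarith
    have hexp : 1 / (d:ℝ) ≤ 1 := by
      rw [div_le_one hd0]; linarith
    have hge : (1 - lam * v (k0 - 1)) ^ (1:ℝ) ≤ (1 - lam * v (k0 - 1)) ^ (1 / (d:ℝ)) :=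
      Real.rpow_le_rpow_of_exponent_ge hb0 hb1 hexp
    rw [Real.rpow_one] at hge
    have hk0eq : k0 - 1 + 1 = k0 := by omega
    have := hv (k0 - 1)
    rw [hk0eq] at this
    have hle : v k0 ≤ lam * v (k0 - 1) := by rw [this]; linarith
    have : lam * v (k0 - 1) < lam * (1 / d) := by
      exact mul_lt_mul_of_pos_left hvk0 hl0
    calc v k0 ≤ lam * v (k0 - 1) := hle
      _ < lam * (1 / d) := this
      _ = lam / d := by ring
  have hvk0half : v k0 ≤ 1 / 2 := by
    have : lam / d ≤ 1 / 2 := by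
      rw [div_le_div_iff₀ hd0 (by norm_num)]
      nlinarith
    linarith
  have hvk0pos : 0 < v k0 := (hvpos k0).1
  have hcpos : ∀ k, 0 < c k := by
    intro k
    rw [hc k]
    exact div_pos (hvpos k).1 (pow_pos hr0 k)
  have hck0 : 0 < c k0 := hcpos k0
  have hid : c k0 * (lam / d) ^ k0 = v k0 := by
    rw [hc k0]
    field_simp
  -- the key estimate
  have hkey : ∀ m : ℕ, ∀ S : ℝ, 0 ≤ S → S ≤ m + 1 →
      (c k0 * S) ^ 2 * ((d:ℝ) / 2) * (lam / d) ^ (k0 + (m + 1)) ≤ c k0 * lam ^ (m + 1) := by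
    intro m S hS0 hS1
    have hdm : (0:ℝ) < (d:ℝ) ^ m := pow_pos hd0 m
    have h1 : (c k0 * S) ^ 2 * ((d:ℝ) / 2) * (lam / d) ^ (k0 + (m + 1)) =
        c k0 * lam ^ (m + 1) * ((c k0 * (lam / d) ^ k0) * S ^ 2 / (2 * (d:ℝ) ^ m)) := by
      rw [pow_add, div_pow, div_pow]
      field_simp
      ring
    rw [h1, hid]
    have hm4 : ((m:ℝ) + 1) ^ 2 ≤ 4 * (d:ℝ) ^ m := by
      have h2m : (2:ℕ) ^ m ≤ d ^ m := Nat.pow_le_pow_left hd m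
      have hnat : (m + 1) ^ 2 ≤ 4 * d ^ m := by
        calc (m + 1) ^ 2 ≤ 2 ^ (m + 2) := stmt16_aux_sq m
          _ = 4 * 2 ^ m := by ring
          _ ≤ 4 * d ^ m := by omega
      exact_mod_cast hnat
    have hS2 : S ^ 2 ≤ ((m:ℝ) + 1) ^ 2 := by nlinarith
    have h2 : v k0 * S ^ 2 / (2 * (d:ℝ) ^ m) ≤ 1 := by
      rw [div_le_one (by positivity)]
      nlinarith [hvk0pos, hS0]
    calc c k0 * lam ^ (m + 1) * (v k0 * S ^ 2 / (2 * (d:ℝ) ^ m)) ≤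
        c k0 * lam ^ (m + 1) * 1 := by
          apply mul_le_mul_of_nonneg_left h2 (by positivity)
      _ = c k0 * lam ^ (m + 1) := mul_one _
  -- sum facts
  have hSnn : ∀ n : ℕ, (0:ℝ) ≤ ∑ i ∈ Finset.range (n + 1), lam ^ i := by
    intro n
    apply Finset.sum_nonneg
    intro i _
    positivity
  have hSle : ∀ n : ℕ, ∑ i ∈ Finset.range (n + 1), lam ^ i ≤ (n:ℝ) + 1 := by
    intro n
    calc ∑ i ∈ Finset.range (n + 1), lam ^ i ≤ ∑ _i ∈ Finset.range (n + 1), (1:ℝ) := by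
          apply Finset.sum_le_sum
          intro i _
          exact pow_le_one₀ (le_of_lt hl0) (le_of_lt hl1)
      _ = (n:ℝ) + 1 := by simp
  -- main induction
  have main : ∀ m : ℕ, 1 ≤ m → c (k0 + m) < c k0 * ∑ i ∈ Finset.range (m + 1), lam ^ i := by
    intro m hm
    induction m, hm using Nat.le_induction with
    | base =>
      have h := hstep (k0 + 1) (by omega)
      have he : k0 + 1 - 1 = k0 := by omega
      rw [he] at h
      have hk := hkey 0 1 (by norm_num) (by norm_num)
      simp only [mul_one, pow_one] at hk
      have hsum : ∑ i ∈ Finset.range (1 + 1), lam ^ i = 1 + lam := by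
        rw [Finset.sum_range_succ, Finset.sum_range_one, pow_zero, pow_one]
      rw [hsum]
      have hk0add : k0 + (0 + 1) = k0 + 1 := by omega
      rw [hk0add] at hk
      nlinarith [hk, h]
    | succ n hn ih =>
      have h := hstep (k0 + n + 1) (by omega)
      have he : k0 + n + 1 - 1 = k0 + n := by omega
      rw [he] at h
      have hcn := hcpos (k0 + n)
      have hsq : (c (k0 + n)) ^ 2 ≤ (c k0 * ∑ i ∈ Finset.range (n + 1), lam ^ i) ^ 2 := by
        apply pow_le_pow_left₀ (le_of_lt hcn) (le_of_lt ih)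
      have hk := hkey n (∑ i ∈ Finset.range (n + 1), lam ^ i) (hSnn n) (hSle n)
      have hpos : (0:ℝ) < ((d:ℝ) / 2) * (lam / d) ^ (k0 + (n + 1)) := by positivity
      have hb : (c (k0 + n)) ^ 2 * ((d:ℝ) / 2) * (lam / d) ^ (k0 + (n + 1)) ≤
          c k0 * lam ^ (n + 1) := by
        calc (c (k0 + n)) ^ 2 * ((d:ℝ) / 2) * (lam / d) ^ (k0 + (n + 1)) ≤
            (c k0 * ∑ i ∈ Finset.range (n + 1), lam ^ i) ^ 2 * ((d:ℝ) / 2) *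
              (lam / d) ^ (k0 + (n + 1)) := by
              rw [mul_assoc, mul_assoc]
              exact mul_le_mul_of_nonneg_right hsq (by positivity)
          _ ≤ c k0 * lam ^ (n + 1) := hk
      have heq : k0 + (n + 1) = k0 + n + 1 := by omega
      rw [heq] at hb
      have hsum : ∑ i ∈ Finset.range (n + 1 + 1), lam ^ i =
          (∑ i ∈ Finset.range (n + 1), lam ^ i) + lam ^ (n + 1) :=
        Finset.sum_range_succ _ _
      have hgoal : c (k0 + (n + 1)) = c (k0 + n + 1) := by rw [← Nat.add_assoc]
      rw [hgoal, hsum]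
      calc c (k0 + n + 1) < c (k0 + n) + (c (k0 + n)) ^ 2 * ((d:ℝ) / 2) *
            (lam / d) ^ (k0 + n + 1) := h
        _ ≤ c (k0 + n) + c k0 * lam ^ (n + 1) := by linarith
        _ < c k0 * (∑ i ∈ Finset.range (n + 1), lam ^ i) + c k0 * lam ^ (n + 1) := by
            linarith
        _ = c k0 * ((∑ i ∈ Finset.range (n + 1), lam ^ i) + lam ^ (n + 1)) := by ring
  -- conclude
  intro k hk
  have hm1 : 1 ≤ k - k0 := by omega
  have hkeq : k0 + (k - k0) = k := by omega
  have h1 := main (k - k0) hm1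
  rw [hkeq] at h1
  refine ⟨h1, ?_⟩
  have hSlt : ∑ i ∈ Finset.range (k - k0 + 1), lam ^ i < 1 / (1 - lam) := by
    have h1l : (0:ℝ) < 1 - lam := by linarith
    have hp : (0:ℝ) < lam ^ (k - k0 + 1) := pow_pos hl0 _
    rw [geom_sum_eq (ne_of_lt hl1), div_lt_iff_of_neg (by linarith : lam - 1 < 0)]
    have he : 1 / (1 - lam) * (lam - 1) = -1 := by
      field_simp
      ring
    rw [he]
    linarith
  calc c k < c k0 * ∑ i ∈ Finset.range (k - k0 + 1), lam ^ i := h1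
    _ < c k0 * (1 / (1 - lam)) := mul_lt_mul_of_pos_left hSlt hck0
    _ = c k0 / (1 - lam) := by ring
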